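/- Let α, β ≥ 0 with α + β ≤ 1, and let ρ_red be the 9×9 matrix (in the ordered basis |00⟩,|01⟩,…,|22⟩ of ℂ³⊗ℂ³) with diagonal entries (1+2α−β)/9 at positions |00⟩,|11⟩,|22⟩ and (2−2α+β)/18 at the remaining six positions, with off-diagonal entries β/6 in the symmetric pairs of positions (|01⟩,|10⟩), (|02⟩,|20⟩), (|12⟩,|21⟩), and all other entries zero (this is any one of the three two-qutrit marginals of the three-qutrit state α|GHZ₃⟩⟨GHZ₃| + β|ψ₃⟩⟨ψ₃| + ((1−α−β)/27)I₂₇, where |GHZ₃⟩ = (1/√3)Σᵢ|iii⟩ and |ψ₃⟩ = (|012⟩+|021⟩+|102⟩+|120⟩+|201⟩+|210⟩)/√6). Then the eigenvalues of ρ_red are (1−α−β)/9, (1+2α−β)/9, and (1−α+2β)/9, each with multiplicity 3, and every eigenvalue is at most 1/3; hence ρ_red ∈ 𝔄𝔉₃. -/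

import Mathlib

open Matrix Kronecker Complex
open scoped ComplexOrder

/-- The canonical maximally entangled vector `|ψ⁺⟩ = (1/√d) ∑ᵢ |ii⟩` on `ℂ^d ⊗ ℂ^d`. -/
noncomputable def psiPlus (d : ℕ) : (Fin d × Fin d) → ℂ :=
  fun p => if p.1 = p.2 then ((Real.sqrt d)⁻¹ : ℝ) else 0

/-- The fully entangled fraction: the supremum over `d × d` unitaries `V` of
`⟨ψ⁺| (I ⊗ V)† ρ (I ⊗ V) |ψ⁺⟩`. -/
noncomputable def fef (d : ℕ) (ρ : Matrix (Fin d × Fin d) (Fin d × Fin d) ℂ) : ℝ :=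
  ⨆ V : Matrix.unitaryGroup (Fin d) ℂ,
    (star (psiPlus d) ⬝ᵥ
      ((((1 : Matrix (Fin d) (Fin d) ℂ) ⊗ₖ (V : Matrix (Fin d) (Fin d) ℂ))ᴴ * ρ *
        ((1 : Matrix (Fin d) (Fin d) ℂ) ⊗ₖ (V : Matrix (Fin d) (Fin d) ℂ))) *ᵥ psiPlus d)).re

/-- A density matrix: positive semidefinite with unit trace. -/
def IsDensityMatrix {n : Type*} [Fintype n] (ρ : Matrix n n ℂ) : Prop :=
  ρ.PosSemidef ∧ ρ.trace = 1

/-- `ρ` has absolute fully entangled fraction: `F(UρU†) ≤ 1/d` for every unitary `U`. -/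
def AbsFEF (d : ℕ) (ρ : Matrix (Fin d × Fin d) (Fin d × Fin d) ℂ) : Prop :=
  ∀ U ∈ Matrix.unitaryGroup (Fin d × Fin d) ℂ, fef d (U * ρ * Uᴴ) ≤ 1 / d

/-- Basis vector `|ij⟩` of `ℂ^d ⊗ ℂ^d`. -/
def ket (d : ℕ) (i j : Fin d) : (Fin d × Fin d) → ℂ :=
  fun p => if p = (i, j) then 1 else 0

/-- Rank-one projector `|v⟩⟨v|`. -/
def proj {n : Type*} (v : n → ℂ) : Matrix n n ℂ :=
  Matrix.vecMulVec v (star v)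

/-- The two-qutrit marginal of the three-qutrit state
`α|GHZ₃⟩⟨GHZ₃| + β|ψ₃⟩⟨ψ₃| + ((1−α−β)/27)I₂₇`. -/
noncomputable def qutritRed (α β : ℝ) : Matrix (Fin 3 × Fin 3) (Fin 3 × Fin 3) ℂ :=
  Matrix.of fun p q =>
    if p = q then
      (if p.1 = p.2 then (((1 + 2*α - β)/9 : ℝ) : ℂ) else (((2 - 2*α + β)/18 : ℝ) : ℂ))
    else if p.1 = q.2 ∧ p.2 = q.1 then ((β/6 : ℝ) : ℂ) else 0

/-! ### Auxiliary material -/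

section Aux

open Polynomial

variable {n : Type*} [Fintype n] [DecidableEq n]

lemma myCharmatrix_conj (P M Q : Matrix n n ℂ) (h : P * Q = 1) :
    charmatrix (P * M * Q) =
      (C : ℂ →+* ℂ[X]).mapMatrix P * charmatrix M * (C : ℂ →+* ℂ[X]).mapMatrix Q := by
  simp only [charmatrix, mul_sub, sub_mul, ← _root_.map_mul]
  congr 1
  rw [mul_assoc, ((scalar_commute (X : ℂ[X]) (Commute.all _) ((C : ℂ →+* ℂ[X]).mapMatrix Q)).eq),
    ← mul_assoc, ← _root_.map_mul ((C : ℂ →+* ℂ[X]).mapMatrix) P Q, h, _root_.map_one, one_mul]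

lemma myCharpoly_conj (P M Q : Matrix n n ℂ) (h : P * Q = 1) :
    (P * M * Q).charpoly = M.charpoly := by
  have e := myCharmatrix_conj P M Q h
  calc (P*M*Q).charpoly
      = ((C : ℂ →+* ℂ[X]).mapMatrix P * charmatrix M * (C : ℂ →+* ℂ[X]).mapMatrix Q).det := by
        rw [Matrix.charpoly, e]
    _ = ((C : ℂ →+* ℂ[X]).mapMatrix P).det * (charmatrix M).det
          * ((C : ℂ →+* ℂ[X]).mapMatrix Q).det := by rw [det_mul, det_mul]
    _ = (((C : ℂ →+* ℂ[X]).mapMatrix P) * ((C : ℂ →+* ℂ[X]).mapMatrix Q)).det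
          * (charmatrix M).det := by rw [det_mul]; ring
    _ = M.charpoly := by
        rw [← _root_.map_mul ((C : ℂ →+* ℂ[X]).mapMatrix) P Q, h, _root_.map_one, det_one,
          one_mul, Matrix.charpoly]

lemma myCharpoly_diagonal (d : n → ℂ) :
    (diagonal d).charpoly = ∏ i, (X - C (d i)) := by
  have : charmatrix (diagonal d) = diagonal fun i => X - C (d i) := by
    ext i j
    by_cases hij : i = j
    · subst hij; simp
    · simp [charmatrix_apply_ne _ _ _ hij, diagonal_apply_ne _ hij, diagonal_apply_ne d hij]
  rw [Matrix.charpoly, this, det_diagonal]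

end Aux

/-- The diagonalizing unitary. -/
noncomputable def Pmat : Matrix (Fin 3 × Fin 3) (Fin 3 × Fin 3) ℂ :=
  Matrix.of fun p q =>
    if q.1 = q.2 then (if p = q then 1 else 0)
    else if p = q then (((Real.sqrt 2)⁻¹ : ℝ) : ℂ)
    else if p = (q.2, q.1) then
      (if q.1 < q.2 then (((Real.sqrt 2)⁻¹ : ℝ) : ℂ) else -(((Real.sqrt 2)⁻¹ : ℝ) : ℂ))
    else 0

/-- The eigenvalues, arranged along the diagonal. -/
noncomputable def Dfun (α β : ℝ) : (Fin 3 × Fin 3) → ℝ := fun q =>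
  if q.1 = q.2 then (1 + 2*α - β)/9 else if q.1 < q.2 then (1 - α + 2*β)/9 else (1 - α - β)/9

lemma hs2 : ((Real.sqrt 2 : ℂ))⁻¹ * ((Real.sqrt 2 : ℂ))⁻¹ = 1/2 := by
  rw [← mul_inv, ← Complex.ofReal_mul]
  norm_num [Real.mul_self_sqrt]

set_option maxHeartbeats 1000000 in
lemma Pmat_unitary : Pmat * Pmatᴴ = 1 := by
  ext p q
  fin_cases p <;> fin_cases q <;>
    simp [Matrix.mul_apply, Fintype.sum_prod_type, Fin.sum_univ_three, Pmat,
      Matrix.one_apply, Prod.ext_iff, Complex.conj_ofReal, hs2] <;> norm_num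

set_option maxHeartbeats 2000000 in
lemma qutritRed_eq (α β : ℝ) :
    qutritRed α β = Pmat * diagonal (fun q => ((Dfun α β q : ℝ) : ℂ)) * Pmatᴴ := by
  have key : ((Real.sqrt 2 : ℂ))⁻¹ ^ 2 = 1/2 := by
    rw [inv_pow, ← Complex.ofReal_pow]
    norm_num [Real.sq_sqrt]
  ext p q
  rw [Matrix.mul_apply]
  simp only [Matrix.mul_diagonal, Matrix.conjTranspose_apply]
  fin_cases p <;> fin_cases q <;>
    simp [Fintype.sum_prod_type, Fin.sum_univ_three, Pmat, qutritRed, Dfun,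
        Prod.ext_iff, Complex.conj_ofReal] <;>
    (ring_nf; rw [key]; ring)

lemma perm9 {γ : Type*} (x y z : γ) :
    ({x,y,y,z,x,y,z,z,x} : Multiset γ) = {z,z,z,x,x,x,y,y,y} := by
  classical
  refine Multiset.ext.mpr fun a => ?_
  simp only [Multiset.insert_eq_cons, Multiset.count_cons, Multiset.count_zero,
    Multiset.count_singleton]
  ring

lemma psi_norm : star (psiPlus 3) ⬝ᵥ psiPlus 3 = 1 := by
  simp [dotProduct, psiPlus, Fintype.sum_prod_type, Fin.sum_univ_three]
  rw [← mul_inv, ← Complex.ofReal_mul]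
  norm_num [Real.mul_self_sqrt]

lemma kron_conjT (M N : Matrix (Fin 3) (Fin 3) ℂ) : (M ⊗ₖ N)ᴴ = Mᴴ ⊗ₖ Nᴴ := by
  ext p q
  simp [Matrix.conjTranspose_apply, Matrix.kroneckerMap_apply, star_mul']

lemma quad_bound (ρ B T : Matrix (Fin 3 × Fin 3) (Fin 3 × Fin 3) ℂ)
    (hT : Tᴴ * T = 1) (hpsd : ((1/3 : ℂ) • 1 - ρ).PosSemidef) (hB : B = Tᴴ * ρ * T) :
    (star (psiPlus 3) ⬝ᵥ (B *ᵥ psiPlus 3)).re ≤ 1/3 := by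
  have h1 : ((1/3 : ℂ) • 1 - B) = Tᴴ * ((1/3 : ℂ) • 1 - ρ) * T := by
    rw [hB, mul_sub, sub_mul]
    congr 1
    rw [mul_smul_comm, smul_mul_assoc, mul_one, hT]
  have h2 := (hpsd.conjTranspose_mul_mul_same T).dotProduct_mulVec_nonneg (psiPlus 3)
  rw [← h1, sub_mulVec, dotProduct_sub, smul_mulVec, one_mulVec, dotProduct_smul,
    psi_norm, smul_eq_mul, mul_one] at h2
  have h3 : (0:ℝ) ≤ ((1/3 : ℂ) - star (psiPlus 3) ⬝ᵥ (B *ᵥ psiPlus 3)).re := by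
    exact_mod_cast (Complex.le_def.mp h2).1
  simp only [Complex.sub_re] at h3
  norm_num at h3 ⊢
  linarith

lemma charpoly_qutritRed (α β : ℝ) :
    (qutritRed α β).charpoly =
      ∏ q : Fin 3 × Fin 3, (Polynomial.X - Polynomial.C ((Dfun α β q : ℝ) : ℂ)) := by
  rw [qutritRed_eq α β, myCharpoly_conj _ _ _ Pmat_unitary, myCharpoly_diagonal]

/-- The multiset of eigenvalues of `qutritRed`, as complex numbers. -/
lemma eig_multiset_complex (α β : ℝ) (hH : (qutritRed α β).IsHermitian) :
    (Finset.univ.val.map (fun q => ((hH.eigenvalues q : ℝ) : ℂ)) : Multiset ℂ) =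
      Finset.univ.val.map (fun q => ((Dfun α β q : ℝ) : ℂ)) := by
  have hprod : ∀ g : Fin 3 × Fin 3 → ℂ,
      (∏ q, (Polynomial.X - Polynomial.C (g q))) =
        ((Finset.univ.val.map g).map (fun a => Polynomial.X - Polynomial.C a)).prod := by
    intro g; rw [Multiset.map_map, Finset.prod_eq_multiset_prod]; rfl
  have h2 : (qutritRed α β).charpoly =
      ∏ q : Fin 3 × Fin 3, (Polynomial.X - Polynomial.C ((hH.eigenvalues q : ℝ) : ℂ)) := by
    conv_lhs => rw [hH.spectral_theorem]
    rw [Unitary.conjStarAlgAut_apply]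
    rw [myCharpoly_conj _ _ _ (Matrix.mem_unitaryGroup_iff.mp hH.eigenvectorUnitary.2),
      myCharpoly_diagonal]
    rfl
  have := congrArg Polynomial.roots ((h2.symm.trans (charpoly_qutritRed α β)))
  rwa [hprod, hprod, Polynomial.roots_multiset_prod_X_sub_C,
    Polynomial.roots_multiset_prod_X_sub_C] at this

/-- The two-qutrit marginal has eigenvalues `(1−α−β)/9, (1+2α−β)/9, (1−α+2β)/9`, each
with multiplicity 3, all at most `1/3`; hence it lies in `𝔄𝔉₃`. -/
theorem qutritRed_absFEF (α β : ℝ) (hα : 0 ≤ α) (hβ : 0 ≤ β) (hαβ : α + β ≤ 1)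
    (hH : (qutritRed α β).IsHermitian) :
    (Finset.univ.val.map hH.eigenvalues : Multiset ℝ) =
      {(1 - α - β)/9, (1 - α - β)/9, (1 - α - β)/9,
       (1 + 2*α - β)/9, (1 + 2*α - β)/9, (1 + 2*α - β)/9,
       (1 - α + 2*β)/9, (1 - α + 2*β)/9, (1 - α + 2*β)/9} ∧
    (∀ i, hH.eigenvalues i ≤ 1/3) ∧
    AbsFEF 3 (qutritRed α β) := by
  have hmapD : (Finset.univ.val.map (fun q => ((Dfun α β q : ℝ) : ℂ)) : Multiset ℂ) =
      {(((1 + 2*α - β)/9 : ℝ) : ℂ), (((1 - α + 2*β)/9 : ℝ) : ℂ), (((1 - α + 2*β)/9 : ℝ) : ℂ),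
       (((1 - α - β)/9 : ℝ) : ℂ), (((1 + 2*α - β)/9 : ℝ) : ℂ), (((1 - α + 2*β)/9 : ℝ) : ℂ),
       (((1 - α - β)/9 : ℝ) : ℂ), (((1 - α - β)/9 : ℝ) : ℂ), (((1 + 2*α - β)/9 : ℝ) : ℂ)} := by
    rw [show (Finset.univ.val : Multiset (Fin 3 × Fin 3)) =
      {(0,0),(0,1),(0,2),(1,0),(1,1),(1,2),(2,0),(2,1),(2,2)} from by decide]
    simp [Dfun]
  have hMain : (Finset.univ.val.map hH.eigenvalues : Multiset ℝ) =
      {(1 - α - β)/9, (1 - α - β)/9, (1 - α - β)/9,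
       (1 + 2*α - β)/9, (1 + 2*α - β)/9, (1 + 2*α - β)/9,
       (1 - α + 2*β)/9, (1 - α + 2*β)/9, (1 - α + 2*β)/9} := by
    apply Multiset.map_injective (f := fun r : ℝ => (r : ℂ)) Complex.ofReal_injective
    rw [Multiset.map_map]
    have e1 : (Finset.univ.val.map ((fun r : ℝ => (r : ℂ)) ∘ hH.eigenvalues) : Multiset ℂ) =
        Finset.univ.val.map (fun q => ((hH.eigenvalues q : ℝ) : ℂ)) := rfl
    rw [e1, eig_multiset_complex α β hH, hmapD]
    simp only [Multiset.insert_eq_cons, Multiset.map_cons, Multiset.map_singleton]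
    exact perm9 _ _ _
  have hBound : ∀ i, hH.eigenvalues i ≤ 1/3 := by
    intro i
    have hmem : hH.eigenvalues i ∈ (Finset.univ.val.map hH.eigenvalues : Multiset ℝ) :=
      Multiset.mem_map_of_mem _ (Finset.mem_univ i)
    rw [hMain] at hmem
    simp only [Multiset.insert_eq_cons, Multiset.mem_cons, Multiset.mem_singleton] at hmem
    rcases hmem with h|h|h|h|h|h|h|h|h <;> rw [h] <;> linarith
  refine ⟨hMain, hBound, ?_⟩
  -- positive semidefiniteness of (1/3)•1 - ρ
  have hDle : ∀ q, Dfun α β q ≤ 1/3 := by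
    intro q
    unfold Dfun
    split_ifs <;> linarith
  have hdiagpsd : (diagonal (fun q => (((1/3 - Dfun α β q : ℝ)) : ℂ))).PosSemidef := by
    refine Matrix.posSemidef_diagonal_iff.mpr fun q => ?_
    rw [Complex.zero_le_real]
    linarith [hDle q]
  have hsplit : (diagonal (fun q : Fin 3 × Fin 3 => ((1/3 - Dfun α β q : ℝ) : ℂ)))
      = diagonal (fun _ => (1/3 : ℂ)) - diagonal (fun q => ((Dfun α β q : ℝ) : ℂ)) := by
    rw [show (fun q : Fin 3 × Fin 3 => ((1/3 - Dfun α β q : ℝ) : ℂ)) =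
        (fun _ => (1/3 : ℂ)) - (fun q => ((Dfun α β q : ℝ) : ℂ)) from by
      funext q; simp only [Pi.sub_apply]; push_cast; ring, diagonal_sub]
    rfl
  have hconst : diagonal (fun _ : Fin 3 × Fin 3 => (1/3 : ℂ)) = (1/3 : ℂ) • 1 := by
    ext p q
    by_cases h : p = q
    · subst h; simp
    · simp [diagonal_apply_ne _ h, Matrix.one_apply_ne h]
  have hkey : (1/3 : ℂ) • 1 - qutritRed α β =
      Pmat * diagonal (fun q => ((1/3 - Dfun α β q : ℝ) : ℂ)) * Pmatᴴ := by
    rw [hsplit, mul_sub, sub_mul, ← qutritRed_eq]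
    congr 1
    rw [hconst, mul_smul_comm, smul_mul_assoc, mul_one, Pmat_unitary]
  have hpsd : ((1/3 : ℂ) • 1 - qutritRed α β).PosSemidef := by
    rw [hkey]
    exact hdiagpsd.mul_mul_conjTranspose_same Pmat
  -- AbsFEF
  intro U hU
  have hUU : U * Uᴴ = 1 := by
    rw [← Matrix.star_eq_conjTranspose]
    exact Matrix.mem_unitaryGroup_iff.mp hU
  have hfef : fef 3 (U * qutritRed α β * Uᴴ) ≤ 1/3 := by
    unfold fef
    haveI : Nonempty (Matrix.unitaryGroup (Fin 3) ℂ) := ⟨1⟩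
    refine ciSup_le fun V => ?_
    set A := (1 : Matrix (Fin 3) (Fin 3) ℂ) ⊗ₖ (V : Matrix (Fin 3) (Fin 3) ℂ) with hAdef
    have hA : Aᴴ * A = 1 := by
      rw [hAdef, kron_conjT, conjTranspose_one, ← Matrix.mul_kronecker_mul, one_mul,
        show (V : Matrix (Fin 3) (Fin 3) ℂ)ᴴ * V = 1 from Matrix.mem_unitaryGroup_iff'.mp V.2,
        Matrix.one_kronecker_one]
    have hT : (Uᴴ * A)ᴴ * (Uᴴ * A) = 1 := by
      rw [conjTranspose_mul, conjTranspose_conjTranspose, mul_assoc, ← mul_assoc U Uᴴ A,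
        hUU, one_mul, hA]
    refine quad_bound (qutritRed α β) _ (Uᴴ * A) hT hpsd ?_
    rw [conjTranspose_mul, conjTranspose_conjTranspose]
    simp only [Matrix.mul_assoc]
  calc fef 3 (U * qutritRed α β * Uᴴ) ≤ 1/3 := hfef
    _ ≤ 1 / ((3:ℕ) : ℝ) := by norm_num
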